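/- Let d ≥ 1 and ν ∈ (0, 1). Let u : ℝ^d → ℂ be continuous and square-integrable with finite Hölder seminorm |||u|||_{C^ν}. Then u is bounded and, for every ε ∈ (0, 1], sup_{x ∈ ℝ^d} |u(x)| ≤ (d/(d+ν)) · ε^ν · |||u|||_{C^ν} + |B(0,1)|^{−1/2} · ε^{−d/2} · ‖u‖_{L²(ℝ^d)}, where |B(0,1)| denotes the Lebesgue measure of the unit ball in ℝ^d. -/

import Mathlib

open MeasureTheory
open scoped Real

noncomputable section

open Metric
open scoped ENNReal NNReal

lemma aux_ball_integral (d : ℕ) (hd : 1 ≤ d) (ν ε : ℝ) (hν : 0 < ν) (hε : 0 < ε) :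
    ∫ y in ball (0 : EuclideanSpace ℝ (Fin d)) ε, ‖y‖ ^ ν =
      d * (volume (ball (0 : EuclideanSpace ℝ (Fin d)) 1)).toReal *
        (ε ^ ((d : ℝ) + ν) / ((d : ℝ) + ν)) := by
  haveI : Nontrivial (EuclideanSpace ℝ (Fin d)) :=
    Module.nontrivial_of_finrank_pos (R := ℝ)
      (by rw [finrank_euclideanSpace_fin]; omega)
  have hdim : Module.finrank ℝ (EuclideanSpace ℝ (Fin d)) = d := finrank_euclideanSpace_fin
  have key := MeasureTheory.integral_fun_norm_addHaar
    (volume : Measure (EuclideanSpace ℝ (Fin d)))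
    (Set.indicator (Set.Iio ε) fun r : ℝ => r ^ ν)
  rw [hdim] at key
  have hL : (∫ x : EuclideanSpace ℝ (Fin d),
      Set.indicator (Set.Iio ε) (fun r : ℝ => r ^ ν) ‖x‖) =
      ∫ y in ball (0 : EuclideanSpace ℝ (Fin d)) ε, ‖y‖ ^ ν := by
    have heq : (fun x : EuclideanSpace ℝ (Fin d) =>
        Set.indicator (Set.Iio ε) (fun r : ℝ => r ^ ν) ‖x‖) =
        Set.indicator (ball (0 : EuclideanSpace ℝ (Fin d)) ε) fun x => ‖x‖ ^ ν := by
      ext x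
      by_cases h : x ∈ ball (0 : EuclideanSpace ℝ (Fin d)) ε
      · rw [Set.indicator_of_mem h,
          Set.indicator_of_mem (by simpa [mem_ball_zero_iff] using h)]
      · rw [Set.indicator_of_notMem h,
          Set.indicator_of_notMem (by simpa [mem_ball_zero_iff] using h)]
    rw [heq, integral_indicator measurableSet_ball]
  rw [hL] at key
  rw [key]
  have hR : (∫ y in Set.Ioi (0:ℝ),
      y ^ (d - 1) • Set.indicator (Set.Iio ε) (fun r : ℝ => r ^ ν) y) =
      ε ^ ((d:ℝ) + ν) / ((d:ℝ) + ν) := by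
    have h1 : (∫ y in Set.Ioi (0:ℝ),
        y ^ (d - 1) • Set.indicator (Set.Iio ε) (fun r : ℝ => r ^ ν) y) =
        ∫ y in Set.Ioo (0:ℝ) ε, y ^ (d - 1) * y ^ ν := by
      have hind : ∀ y : ℝ, y ^ (d - 1) • Set.indicator (Set.Iio ε) (fun r : ℝ => r ^ ν) y
          = Set.indicator (Set.Iio ε) (fun y : ℝ => y ^ (d - 1) • y ^ ν) y := fun y =>
        (Set.indicator_smul_apply (Set.Iio ε) (fun y : ℝ => y ^ (d - 1)) (fun r : ℝ => r ^ ν) y).symm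
      simp only [hind]
      rw [setIntegral_indicator measurableSet_Iio, Set.Ioi_inter_Iio]
      simp [smul_eq_mul]
    rw [h1]
    have h2 : ∀ y ∈ Set.Ioo (0:ℝ) ε, y ^ (d - 1) * y ^ ν = y ^ ((d:ℝ) - 1 + ν) := by
      intro y hy
      rw [← Real.rpow_natCast y (d - 1), Nat.cast_sub hd, Nat.cast_one,
        ← Real.rpow_add hy.1]
    rw [setIntegral_congr_fun measurableSet_Ioo h2, ← integral_Ioc_eq_integral_Ioo,
      ← intervalIntegral.integral_of_le hε.le]
    have h3 : (-1 : ℝ) < (d:ℝ) - 1 + ν := by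
      have : (1:ℝ) ≤ (d:ℝ) := by exact_mod_cast hd
      linarith
    rw [integral_rpow (Or.inl h3)]
    rw [Real.zero_rpow (by linarith)]
    ring_nf
  rw [hR, nsmul_eq_mul, smul_eq_mul, measureReal_def]
  ring


/-- a continuous, square-integrable function with finite Hölder
seminorm `H` of order `ν` is bounded, with the quantitative bound of
Lemma A.2(a) of the paper. -/
theorem stmt2 (d : ℕ) (hd : 1 ≤ d) (ν : ℝ) (hν : ν ∈ Set.Ioo (0 : ℝ) 1)
    (u : EuclideanSpace ℝ (Fin d) → ℂ) (hu : Continuous u)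
    (hu2 : MemLp u 2 (volume : Measure (EuclideanSpace ℝ (Fin d))))
    (H : ℝ) (hH : 0 ≤ H)
    (hHolder : ∀ x y : EuclideanSpace ℝ (Fin d),
      0 < dist x y → dist x y ≤ 1 → ‖u x - u y‖ ≤ H * dist x y ^ ν) :
    (∃ B : ℝ, ∀ x, ‖u x‖ ≤ B) ∧
    ∀ ε ∈ Set.Ioc (0 : ℝ) 1, ∀ x : EuclideanSpace ℝ (Fin d),
      ‖u x‖ ≤ (d / (d + ν)) * ε ^ ν * H +
        (volume (Metric.ball (0 : EuclideanSpace ℝ (Fin d)) 1)).toReal ^ (-(1 : ℝ) / 2) *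
          ε ^ (-(d : ℝ) / 2) * (eLpNorm u 2 volume).toReal := by
  haveI : Nontrivial (EuclideanSpace ℝ (Fin d)) :=
    Module.nontrivial_of_finrank_pos (R := ℝ)
      (by rw [finrank_euclideanSpace_fin]; omega)
  have hdim : Module.finrank ℝ (EuclideanSpace ℝ (Fin d)) = d := finrank_euclideanSpace_fin
  set V := (volume (ball (0 : EuclideanSpace ℝ (Fin d)) 1)).toReal with hVdef
  have hV0 : 0 < V :=
    ENNReal.toReal_pos (measure_ball_pos _ _ one_pos).ne' measure_ball_lt_top.ne
  set N := (eLpNorm u 2 (volume : Measure (EuclideanSpace ℝ (Fin d)))).toReal with hNdef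
  have hN0 : 0 ≤ N := ENNReal.toReal_nonneg
  have main : ∀ ε ∈ Set.Ioc (0:ℝ) 1, ∀ x : EuclideanSpace ℝ (Fin d),
      ‖u x‖ ≤ (d / (d + ν)) * ε ^ ν * H + V ^ (-(1:ℝ)/2) * ε ^ (-(d:ℝ)/2) * N := by
    intro ε hε x
    have hε0 : 0 < ε := hε.1
    set B := ball x ε with hBdef
    have hBfin : volume B ≠ ⊤ := measure_ball_lt_top.ne
    haveI : IsFiniteMeasure ((volume : Measure (EuclideanSpace ℝ (Fin d))).restrict B) :=
      ⟨by simpa [Measure.restrict_apply_univ] using measure_ball_lt_top (x := x) (r := ε)⟩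
    set A := (volume B).toReal with hAdef
    have hA : A = ε ^ ((d:ℝ)) * V := by
      rw [hAdef, hBdef, Measure.addHaar_ball volume x hε0.le, hdim, ENNReal.toReal_mul,
        ENNReal.toReal_ofReal (pow_nonneg hε0.le d), ← Real.rpow_natCast ε d]
    have hεd : (0:ℝ) < ε ^ ((d:ℝ)) := Real.rpow_pos_of_pos hε0 _
    have hA0 : 0 < A := by rw [hA]; positivity
    -- integrability facts
    have hInt_u : IntegrableOn u B volume :=
      (hu2.restrict B).integrable (by norm_num)
    have hInt_norm : IntegrableOn (fun y => ‖u y‖) B volume := hInt_u.norm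
    have hcd : Continuous (fun y : EuclideanSpace ℝ (Fin d) => dist x y ^ ν) := by
      apply Continuous.rpow_const (continuous_const.dist continuous_id)
      exact fun y => Or.inr hν.1.le
    have hInt_dist : IntegrableOn (fun y : EuclideanSpace ℝ (Fin d) => dist x y ^ ν) B volume :=
      ((hcd.continuousOn).integrableOn_compact (isCompact_closedBall x ε)).mono_set
        ball_subset_closedBall
    have hInt_diff : IntegrableOn (fun y => ‖u x - u y‖) B volume :=
      ((integrableOn_const measure_ball_lt_top.ne).sub hInt_u).norm
    -- step 1-3: averaging
    have step1 : A * ‖u x‖ ≤ (∫ y in B, ‖u x - u y‖) + ∫ y in B, ‖u y‖ := by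
      have e0 : A * ‖u x‖ = ∫ _ in B, ‖u x‖ := by
        rw [setIntegral_const, smul_eq_mul, measureReal_def]
      rw [e0, ← integral_add hInt_diff hInt_norm]
      refine setIntegral_mono_on (integrableOn_const measure_ball_lt_top.ne)
        (hInt_diff.add hInt_norm) measurableSet_ball ?_
      intro y _
      calc ‖u x‖ = ‖(u x - u y) + u y‖ := by rw [sub_add_cancel]
        _ ≤ ‖u x - u y‖ + ‖u y‖ := norm_add_le _ _
    -- step 4-5: Hölder term
    have step2 : (∫ y in B, ‖u x - u y‖) ≤ H * (d * V * (ε ^ ((d:ℝ) + ν) / ((d:ℝ) + ν))) := by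
      have h4 : (∫ y in B, ‖u x - u y‖) ≤ ∫ y in B, H * dist x y ^ ν := by
        refine setIntegral_mono_on hInt_diff (hInt_dist.const_mul H) measurableSet_ball ?_
        intro y hy
        rcases eq_or_lt_of_le (dist_nonneg (x := x) (y := y)) with h0 | h0
        · have hxy : x = y := by rwa [eq_comm, dist_eq_zero] at h0
          simp [hxy, Real.zero_rpow hν.1.ne', ← h0]
        · exact hHolder x y h0
            (le_trans (le_of_lt (by rwa [mem_ball, dist_comm] at hy)) hε.2)
      have h5 : (∫ y in B, dist x y ^ ν) = ∫ y in ball (0 : EuclideanSpace ℝ (Fin d)) ε, ‖y‖ ^ ν := by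
        rw [← integral_indicator measurableSet_ball, ← integral_indicator measurableSet_ball]
        rw [← integral_sub_right_eq_self
          (fun z => Set.indicator (ball (0 : EuclideanSpace ℝ (Fin d)) ε)
            (fun z => ‖z‖ ^ ν) z) x]
        congr 1
        ext y
        by_cases h : y ∈ B
        · rw [Set.indicator_of_mem h, Set.indicator_of_mem
            (by rw [mem_ball_zero_iff, ← dist_eq_norm]; rwa [mem_ball] at h)]
          rw [← dist_eq_norm, dist_comm]
        · rw [Set.indicator_of_notMem h, Set.indicator_of_notMem
            (by rw [mem_ball_zero_iff, ← dist_eq_norm]; rwa [mem_ball] at h)]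
      calc (∫ y in B, ‖u x - u y‖) ≤ ∫ y in B, H * dist x y ^ ν := h4
        _ = H * ∫ y in B, dist x y ^ ν := by rw [integral_const_mul]
        _ = H * (d * V * (ε ^ ((d:ℝ) + ν) / ((d:ℝ) + ν))) := by
            rw [h5, aux_ball_integral d hd ν ε hν.1 hε0]
    -- step 6: Cauchy-Schwarz term
    have step3 : (∫ y in B, ‖u y‖) ≤ A ^ ((1:ℝ)/2) * N := by
      have h1 : (∫ y in B, ‖u y‖) = (eLpNorm u 1 (volume.restrict B)).toReal := by
        rw [integral_norm_eq_lintegral_enorm (hu.aestronglyMeasurable.restrict),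
          eLpNorm_one_eq_lintegral_enorm]
      have h2 : eLpNorm u 1 (volume.restrict B) ≤
          eLpNorm u 2 volume * (volume B) ^ ((1:ℝ)/2) := by
        have h := eLpNorm_le_eLpNorm_mul_rpow_measure_univ (p := 1) (q := 2)
          (by norm_num) (hu.aestronglyMeasurable.restrict (μ := volume) (s := B))
        rw [Measure.restrict_apply_univ] at h
        have hexp : 1 / (1:ℝ≥0∞).toReal - 1 / (2:ℝ≥0∞).toReal = (1:ℝ)/2 := by norm_num
        rw [hexp] at h
        exact h.trans
          (mul_le_mul_left (eLpNorm_mono_measure _ Measure.restrict_le_self) _)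
      have hfin : eLpNorm u 2 (volume : Measure (EuclideanSpace ℝ (Fin d))) *
          (volume B) ^ ((1:ℝ)/2) ≠ ⊤ :=
        ENNReal.mul_ne_top hu2.2.ne (by simp [ENNReal.rpow_eq_top_iff, hBfin])
      calc (∫ y in B, ‖u y‖) = (eLpNorm u 1 (volume.restrict B)).toReal := h1
        _ ≤ (eLpNorm u 2 volume * (volume B) ^ ((1:ℝ)/2)).toReal :=
            ENNReal.toReal_mono hfin h2
        _ = N * A ^ ((1:ℝ)/2) := by
            rw [ENNReal.toReal_mul, ← ENNReal.toReal_rpow]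
        _ = A ^ ((1:ℝ)/2) * N := mul_comm _ _
    -- combine
    have hcomb : A * ‖u x‖ ≤
        H * (d * V * (ε ^ ((d:ℝ) + ν) / ((d:ℝ) + ν))) + A ^ ((1:ℝ)/2) * N :=
      step1.trans (add_le_add step2 step3)
    have hfinal := (le_div_iff₀' hA0).mpr hcomb
    refine hfinal.trans_eq ?_
    have hdν : (0:ℝ) < (d:ℝ) + ν := add_pos_of_nonneg_of_pos (Nat.cast_nonneg d) hν.1
    have e1 : ε ^ ((d:ℝ) + ν) = ε ^ ((d:ℝ)) * ε ^ ν := Real.rpow_add hε0 _ _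
    have e2 : A ^ ((1:ℝ)/2) = ε ^ ((d:ℝ)/2) * V ^ ((1:ℝ)/2) := by
      rw [hA, Real.mul_rpow hεd.le hV0.le, ← Real.rpow_mul hε0.le]
      ring_nf
    have k1 : ε ^ ((d:ℝ)/2) = ε ^ (-(d:ℝ)/2) * ε ^ ((d:ℝ)) := by
      rw [← Real.rpow_add hε0]
      ring_nf
    have k2 : V ^ ((1:ℝ)/2) = V ^ (-(1:ℝ)/2) * V := by
      have h12 : (1:ℝ)/2 = -(1:ℝ)/2 + 1 := by norm_num
      rw [h12, Real.rpow_add hV0, Real.rpow_one]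
    rw [e1, e2, k1, k2, hA]
    field_simp
  refine ⟨⟨(d / (d + ν)) * 1 ^ ν * H + V ^ (-(1:ℝ)/2) * 1 ^ (-(d:ℝ)/2) * N,
    fun x => main 1 ⟨one_pos, le_refl 1⟩ x⟩, main⟩
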